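/- Let β₀ ∈ (0,1) and g_δ(t) = δ^{-1} 1_{[0,δ]}(t). There exists a constant C > 0 depending only on β₀ such that for all δ₁, δ₂ > 0, all t > 0, and all s₁, s₂ ∈ [0,t] with s₁ ≠ s₂: ∫₀ᵗ∫₀ᵗ g_{δ₁}(t - s₁ - r₁) g_{δ₂}(t - s₂ - r₂) |r₁ - r₂|^{-β₀} dr₁ dr₂ ≤ C |s₁ - s₂|^{-β₀}. -/

import Mathlib

open MeasureTheory Real

noncomputable def wt (δ c : ℝ) : ℝ → ℝ :=
  fun r => δ⁻¹ * Set.indicator (Set.Icc (0:ℝ) δ) (fun _ => (1:ℝ)) (c - r)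

lemma wt_eq (δ c : ℝ) : wt δ c = Set.indicator (Set.Icc (c - δ) c) (fun _ => δ⁻¹) := by
  funext r
  by_cases h : r ∈ Set.Icc (c - δ) c
  · have h' : c - r ∈ Set.Icc (0:ℝ) δ := ⟨by linarith [h.2], by linarith [h.1]⟩
    simp [wt, h, h']
  · have h' : c - r ∉ Set.Icc (0:ℝ) δ := fun hm => h ⟨by linarith [hm.2], by linarith [hm.1]⟩
    simp [wt, h, h']

lemma wt_nonneg {δ : ℝ} (hδ : 0 < δ) (c r : ℝ) : 0 ≤ wt δ c r := by
  rw [wt_eq]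
  exact Set.indicator_nonneg (fun _ _ => by positivity) r

lemma wt_le {δ : ℝ} (hδ : 0 < δ) (c r : ℝ) : wt δ c r ≤ δ⁻¹ := by
  rw [wt_eq]
  by_cases h : r ∈ Set.Icc (c - δ) c <;> simp [h, inv_nonneg.2 hδ.le]

lemma wt_measurable (δ c : ℝ) : Measurable (wt δ c) := by
  rw [wt_eq]; exact measurable_const.indicator measurableSet_Icc

lemma wt_support {δ c r : ℝ} (h : wt δ c r ≠ 0) : r ∈ Set.Icc (c - δ) c := by
  by_contra hc
  rw [wt_eq] at h
  exact h (Set.indicator_of_notMem hc _)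

lemma wt_integrable {δ : ℝ} (hδ : 0 < δ) (c : ℝ) : Integrable (wt δ c) volume := by
  rw [wt_eq, integrable_indicator_iff measurableSet_Icc]
  refine integrableOn_const ?_
  rw [Real.volume_Icc]; exact ENNReal.ofReal_ne_top

lemma wt_integral_le {δ : ℝ} (hδ : 0 < δ) (c t : ℝ) :
    ∫ r in Set.Ioc (0:ℝ) t, wt δ c r ≤ 1 := by
  rw [wt_eq, setIntegral_indicator measurableSet_Icc, setIntegral_const, smul_eq_mul]
  have h1 : volume (Set.Ioc (0:ℝ) t ∩ Set.Icc (c - δ) c) ≤ ENNReal.ofReal δ := by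
    refine le_trans (measure_mono Set.inter_subset_right) ?_
    rw [Real.volume_Icc]
    exact ENNReal.ofReal_le_ofReal (by linarith)
  have h2 : (volume (Set.Ioc (0:ℝ) t ∩ Set.Icc (c - δ) c)).toReal ≤ δ := by
    refine le_trans (ENNReal.toReal_mono ENNReal.ofReal_ne_top h1) ?_
    rw [ENNReal.toReal_ofReal hδ.le]
  calc (volume (Set.Ioc (0:ℝ) t ∩ Set.Icc (c - δ) c)).toReal * δ⁻¹
      ≤ δ * δ⁻¹ := mul_le_mul_of_nonneg_right h2 (by positivity)
    _ = 1 := mul_inv_cancel₀ hδ.ne'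

lemma absrpow_II {β : ℝ} (hβ : β < 1) {δ : ℝ} (hδ : 0 ≤ δ) :
    IntervalIntegrable (fun x : ℝ => |x| ^ (-β)) volume 0 δ := by
  have h := intervalIntegral.intervalIntegrable_rpow' (a := 0) (b := δ) (r := -β) (by linarith)
  rw [intervalIntegrable_iff] at h ⊢
  refine h.congr_fun ?_ measurableSet_uIoc
  intro x hx
  rw [Set.uIoc_of_le hδ] at hx
  simp [abs_of_pos hx.1]

lemma absrpow_integral {β : ℝ} (hβ : β ∈ Set.Ioo (0:ℝ) 1) {δ : ℝ} (hδ : 0 ≤ δ) :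
    ∫ x in (0:ℝ)..δ, |x| ^ (-β) = δ ^ (1 - β) / (1 - β) := by
  have h1 : (∫ x in (0:ℝ)..δ, |x| ^ (-β)) = ∫ x in (0:ℝ)..δ, x ^ (-β) := by
    apply intervalIntegral.integral_congr
    intro x hx
    rw [Set.uIcc_of_le hδ] at hx
    simp [abs_of_nonneg hx.1]
  have he : -β + 1 = 1 - β := by ring
  rw [h1, integral_rpow (Or.inl (by linarith [hβ.2] : (-1:ℝ) < -β)),
    Real.zero_rpow (by rw [he]; intro h; simp only [sub_eq_zero] at h; linarith [hβ.2] : -β + 1 ≠ 0),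
    he, sub_zero]

lemma kernel_II {β : ℝ} (hβ : β ∈ Set.Ioo (0:ℝ) 1) {δ : ℝ} (hδ : 0 < δ) (y : ℝ) :
    IntervalIntegrable (fun x : ℝ => |y - x| ^ (-β)) volume (y - δ) (y + δ) := by
  have h0 : IntervalIntegrable (fun x : ℝ => |x| ^ (-β)) volume (-δ) δ := by
    have h2 := absrpow_II hβ.2 hδ.le
    have h1 : IntervalIntegrable (fun x : ℝ => |x| ^ (-β)) volume (-δ) 0 := by
      have := ((IntervalIntegrable.iff_comp_neg (by simp)).1 h2)
      simp only [abs_neg, neg_zero] at this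
      exact this.symm
    exact h1.trans h2
  have := h0.comp_sub_left y
  have e1 : y - -δ = y + δ := by ring
  rw [e1] at this
  exact this.symm

lemma kernel_integrableOn {β : ℝ} (hβ : β ∈ Set.Ioo (0:ℝ) 1) {δ : ℝ} (hδ : 0 < δ) (y : ℝ) :
    IntegrableOn (fun x => |y - x| ^ (-β)) (Set.Icc (y - δ) (y + δ)) volume := by
  rw [integrableOn_Icc_iff_integrableOn_Ioc]
  have := kernel_II hβ hδ y
  rwa [intervalIntegrable_iff_integrableOn_Ioc_of_le (by linarith)] at this

lemma kernel_integral {β : ℝ} (hβ : β ∈ Set.Ioo (0:ℝ) 1) {δ : ℝ} (hδ : 0 < δ) (y : ℝ) :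
    ∫ x in Set.Icc (y - δ) (y + δ), |y - x| ^ (-β) = 2 * (δ ^ (1 - β) / (1 - β)) := by
  rw [MeasureTheory.integral_Icc_eq_integral_Ioc,
    ← intervalIntegral.integral_of_le (by linarith : y - δ ≤ y + δ),
    intervalIntegral.integral_comp_sub_left (fun u : ℝ => |u| ^ (-β)) y]
  have e1 : y - (y + δ) = -δ := by ring
  have e2 : y - (y - δ) = δ := by ring
  rw [e1, e2]
  have hi2 : IntervalIntegrable (fun x : ℝ => |x| ^ (-β)) volume 0 δ := absrpow_II hβ.2 hδ.le
  have hi1 : IntervalIntegrable (fun x : ℝ => |x| ^ (-β)) volume (-δ) 0 := by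
    have := ((IntervalIntegrable.iff_comp_neg (by simp)).1 hi2)
    simp only [abs_neg, neg_zero] at this
    exact this.symm
  rw [← intervalIntegral.integral_add_adjacent_intervals hi1 hi2]
  have hneg : (∫ x in (-δ:ℝ)..0, |x| ^ (-β)) = ∫ x in (0:ℝ)..δ, |x| ^ (-β) := by
    have := intervalIntegral.integral_comp_neg (a := (0:ℝ)) (b := δ) (fun u : ℝ => |u| ^ (-β))
    simp only [abs_neg, neg_zero] at this
    exact this.symm
  rw [hneg, absrpow_integral hβ hδ.le]
  ring

noncomputable def phi (β δ y c : ℝ) : ℝ → ℝ := fun r =>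
  Set.indicator (Set.Icc (y - δ) (y + δ)) (fun x => δ⁻¹ * |y - x| ^ (-β)) r +
  Set.indicator (Set.Icc (c - δ) c) (fun _ => δ⁻¹ * δ ^ (-β)) r

lemma phi_nonneg {β δ : ℝ} (hδ : 0 < δ) (y c r : ℝ) : 0 ≤ phi β δ y c r := by
  unfold phi
  exact add_nonneg (Set.indicator_nonneg (fun x _ => by positivity) r)
    (Set.indicator_nonneg (fun x _ => by positivity) r)

lemma phi_integrable {β : ℝ} (hβ : β ∈ Set.Ioo (0:ℝ) 1) {δ : ℝ} (hδ : 0 < δ) (y c : ℝ) :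
    Integrable (phi β δ y c) volume := by
  unfold phi
  apply Integrable.add
  · rw [integrable_indicator_iff measurableSet_Icc]
    exact (kernel_integrableOn hβ hδ y).const_mul _
  · rw [integrable_indicator_iff measurableSet_Icc]
    refine integrableOn_const ?_
    rw [Real.volume_Icc]; exact ENNReal.ofReal_ne_top

lemma phi_integral {β : ℝ} (hβ : β ∈ Set.Ioo (0:ℝ) 1) {δ : ℝ} (hδ : 0 < δ) (y c : ℝ) :
    ∫ r, phi β δ y c r = (2 / (1 - β) + 1) * δ ^ (-β) := by
  have hβ1 : 0 < 1 - β := by linarith [hβ.2]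
  unfold phi
  rw [integral_add
      ((integrable_indicator_iff measurableSet_Icc).2 ((kernel_integrableOn hβ hδ y).const_mul _))
      ((integrable_indicator_iff measurableSet_Icc).2 (integrableOn_const
        (by rw [Real.volume_Icc]; exact ENNReal.ofReal_ne_top))),
    integral_indicator measurableSet_Icc, integral_indicator measurableSet_Icc,
    integral_const_mul, kernel_integral hβ hδ y, setIntegral_const, smul_eq_mul,
    measureReal_def, Real.volume_Icc]
  have e3 : c - (c - δ) = δ := by ring
  rw [e3, ENNReal.toReal_ofReal hδ.le]
  have e4 : δ ^ (1 - β) = δ * δ ^ (-β) := by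
    rw [show (1:ℝ) - β = 1 + (-β) by ring, Real.rpow_add hδ, Real.rpow_one]
  rw [e4]
  field_simp

lemma h_le_phi {β : ℝ} (hβ : β ∈ Set.Ioo (0:ℝ) 1) {δ : ℝ} (hδ : 0 < δ) (y c r : ℝ) :
    wt δ c r * |y - r| ^ (-β) ≤ phi β δ y c r := by
  by_cases hr : r ∈ Set.Icc (c - δ) c
  · have hw : wt δ c r = δ⁻¹ := by rw [wt_eq]; exact Set.indicator_of_mem hr _
    rw [hw]
    by_cases hnear : r ∈ Set.Icc (y - δ) (y + δ)
    · unfold phi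
      rw [Set.indicator_of_mem hnear, Set.indicator_of_mem hr]
      have : (0:ℝ) ≤ δ⁻¹ * δ ^ (-β) := by positivity
      linarith
    · unfold phi
      rw [Set.indicator_of_notMem hnear, Set.indicator_of_mem hr, zero_add]
      have hd : δ ≤ |y - r| := by
        simp only [Set.mem_Icc, not_and_or, not_le] at hnear
        rcases hnear with h | h
        · rw [abs_of_pos (by linarith)]; linarith
        · rw [abs_of_neg (by linarith)]; linarith
      have hkle : |y - r| ^ (-β) ≤ δ ^ (-β) :=
        Real.rpow_le_rpow_of_nonpos hδ hd (by linarith [hβ.1])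
      exact mul_le_mul_of_nonneg_left hkle (by positivity)
  · have hw : wt δ c r = 0 := by rw [wt_eq]; exact Set.indicator_of_notMem hr _
    rw [hw, zero_mul]; exact phi_nonneg hδ y c r

lemma h_measurable {β : ℝ} (δ c y : ℝ) :
    Measurable (fun r => wt δ c r * |y - r| ^ (-β)) :=
  (wt_measurable δ c).mul (((measurable_const.sub measurable_id).abs).pow measurable_const)

lemma h_integrableOn {β : ℝ} (hβ : β ∈ Set.Ioo (0:ℝ) 1) {δ : ℝ} (hδ : 0 < δ) (y c : ℝ)
    (s : Set ℝ) : IntegrableOn (fun r => wt δ c r * |y - r| ^ (-β)) s volume := by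
  refine Integrable.integrableOn ?_
  refine Integrable.mono' (phi_integrable hβ hδ y c)
    (h_measurable δ c y).aestronglyMeasurable ?_
  filter_upwards with r
  rw [Real.norm_eq_abs, abs_of_nonneg (mul_nonneg (wt_nonneg hδ c r) (by positivity))]
  exact h_le_phi hβ hδ y c r

lemma h_integral_le {β : ℝ} (hβ : β ∈ Set.Ioo (0:ℝ) 1) {δ : ℝ} (hδ : 0 < δ) (y c t : ℝ) :
    ∫ r in Set.Ioc (0:ℝ) t, wt δ c r * |y - r| ^ (-β) ≤ (2 / (1 - β) + 1) * δ ^ (-β) := by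
  calc ∫ r in Set.Ioc (0:ℝ) t, wt δ c r * |y - r| ^ (-β)
      ≤ ∫ r in Set.Ioc (0:ℝ) t, phi β δ y c r :=
        setIntegral_mono_on (h_integrableOn hβ hδ y c _)
          ((phi_integrable hβ hδ y c).integrableOn) measurableSet_Ioc
          (fun r _ => h_le_phi hβ hδ y c r)
    _ ≤ ∫ r, phi β δ y c r :=
        setIntegral_le_integral (phi_integrable hβ hδ y c)
          (Filter.Eventually.of_forall (phi_nonneg hδ y c))
    _ = _ := phi_integral hβ hδ y c

lemma third_rpow {β d : ℝ} (hβ : β ∈ Set.Ioo (0:ℝ) 1) (hd : 0 < d) :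
    (d / 3) ^ (-β) ≤ 3 * d ^ (-β) := by
  have hdpow : 0 < d ^ (-β) := Real.rpow_pos_of_pos hd _
  rw [Real.div_rpow hd.le (by norm_num : (0:ℝ) ≤ 3),
    Real.rpow_neg (by norm_num : (0:ℝ) ≤ 3), div_eq_mul_inv, inv_inv]
  have h6 : (3:ℝ) ^ β ≤ 3 := by
    calc (3:ℝ) ^ β ≤ 3 ^ (1:ℝ) :=
        Real.rpow_le_rpow_of_exponent_le (by norm_num) hβ.2.le
      _ = 3 := Real.rpow_one 3
  calc d ^ (-β) * 3 ^ β ≤ d ^ (-β) * 3 := mul_le_mul_of_nonneg_left h6 hdpow.le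
    _ = 3 * d ^ (-β) := mul_comm _ _

lemma F_integrable {β : ℝ} (hβ : β ∈ Set.Ioo (0:ℝ) 1) {δ₁ δ₂ : ℝ} (h1 : 0 < δ₁)
    (h2 : 0 < δ₂) (t c₁ c₂ : ℝ) :
    Integrable (fun p : ℝ × ℝ => wt δ₁ c₁ p.1 * (wt δ₂ c₂ p.2 * |p.1 - p.2| ^ (-β)))
      ((volume.restrict (Set.Ioc (0:ℝ) t)).prod (volume.restrict (Set.Ioc (0:ℝ) t))) := by
  have hmeas : Measurable (fun p : ℝ × ℝ =>
      wt δ₁ c₁ p.1 * (wt δ₂ c₂ p.2 * |p.1 - p.2| ^ (-β))) :=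
    ((wt_measurable δ₁ c₁).comp measurable_fst).mul
      (((wt_measurable δ₂ c₂).comp measurable_snd).mul
        (((measurable_fst.sub measurable_snd).abs).pow measurable_const))
  rw [integrable_prod_iff hmeas.aestronglyMeasurable]
  constructor
  · filter_upwards with x
    exact ((h_integrableOn hβ h2 x c₂ _).const_mul _)
  · apply Integrable.mono' (g := fun _ => δ₁⁻¹ * ((2 / (1 - β) + 1) * δ₂ ^ (-β)))
    · exact integrableOn_const (by rw [Real.volume_Ioc]; exact ENNReal.ofReal_ne_top)
    · exact hmeas.aestronglyMeasurable.norm.integral_prod_right'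
    · filter_upwards with x
      have hnn : ∀ y, 0 ≤ wt δ₁ c₁ x * (wt δ₂ c₂ y * |x - y| ^ (-β)) := fun y =>
        mul_nonneg (wt_nonneg h1 _ _) (mul_nonneg (wt_nonneg h2 _ _) (by positivity))
      have e : (fun y => ‖wt δ₁ c₁ x * (wt δ₂ c₂ y * |x - y| ^ (-β))‖)
          = fun y => wt δ₁ c₁ x * (wt δ₂ c₂ y * |x - y| ^ (-β)) := by
        funext y; rw [Real.norm_eq_abs, abs_of_nonneg (hnn y)]
      rw [Real.norm_eq_abs, e, integral_const_mul]
      have hG0 : 0 ≤ ∫ y in Set.Ioc (0:ℝ) t, wt δ₂ c₂ y * |x - y| ^ (-β) :=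
        setIntegral_nonneg measurableSet_Ioc
          (fun y _ => mul_nonneg (wt_nonneg h2 _ _) (by positivity))
      have hGle := h_integral_le hβ h2 x c₂ t
      rw [abs_of_nonneg (mul_nonneg (wt_nonneg h1 _ _) hG0)]
      exact mul_le_mul (wt_le h1 _ _) hGle hG0 (by positivity)

lemma master {β : ℝ} (hβ : β ∈ Set.Ioo (0:ℝ) 1) {δ₁ δ₂ : ℝ} (h1 : 0 < δ₁) (h2 : 0 < δ₂)
    (h12 : δ₁ ≤ δ₂) {t : ℝ} (ht : 0 < t) {s₁ s₂ : ℝ} (hs₁ : s₁ ∈ Set.Icc (0:ℝ) t)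
    (hs₂ : s₂ ∈ Set.Icc (0:ℝ) t) (hne : s₁ ≠ s₂) :
    ∫ r₁ in Set.Ioc (0:ℝ) t, ∫ r₂ in Set.Ioc (0:ℝ) t,
      wt δ₁ (t - s₁) r₁ * (wt δ₂ (t - s₂) r₂ * |r₁ - r₂| ^ (-β))
      ≤ (3 * (2 / (1 - β) + 1) + 3) * |s₁ - s₂| ^ (-β) := by
  obtain ⟨hβ0, hβ1⟩ := hβ
  have hβ' : β ∈ Set.Ioo (0:ℝ) 1 := ⟨hβ0, hβ1⟩
  set d := |s₁ - s₂| with hd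
  have hd0 : 0 < d := abs_pos.2 (sub_ne_zero.2 hne)
  have hdpow : 0 < d ^ (-β) := Real.rpow_pos_of_pos hd0 _
  have h1β : 0 < 1 - β := by linarith
  have hK : 0 < 2 / (1 - β) + 1 := by positivity
  rcases le_or_gt d (3 * δ₂) with hcase | hcase
  · -- near case
    have h3 : δ₂ ^ (-β) ≤ (d / 3) ^ (-β) :=
      Real.rpow_le_rpow_of_nonpos (by positivity) (by linarith) (by linarith)
    calc ∫ r₁ in Set.Ioc (0:ℝ) t, ∫ r₂ in Set.Ioc (0:ℝ) t,
          wt δ₁ (t - s₁) r₁ * (wt δ₂ (t - s₂) r₂ * |r₁ - r₂| ^ (-β))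
        ≤ ∫ r₁ in Set.Ioc (0:ℝ) t, wt δ₁ (t - s₁) r₁ * ((2 / (1 - β) + 1) * δ₂ ^ (-β)) := by
          refine setIntegral_mono_on
            ((F_integrable hβ' h1 h2 t (t - s₁) (t - s₂)).integral_prod_left)
            ((wt_integrable h1 _).integrableOn.mul_const _) measurableSet_Ioc ?_
          intro r₁ _
          rw [integral_const_mul]
          exact mul_le_mul_of_nonneg_left (h_integral_le hβ' h2 r₁ (t - s₂) t)
            (wt_nonneg h1 _ _)
      _ = (∫ r₁ in Set.Ioc (0:ℝ) t, wt δ₁ (t - s₁) r₁) * ((2 / (1 - β) + 1) * δ₂ ^ (-β)) :=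
          integral_mul_const _ _
      _ ≤ 1 * ((2 / (1 - β) + 1) * δ₂ ^ (-β)) :=
          mul_le_mul_of_nonneg_right (wt_integral_le h1 _ t) (by positivity)
      _ = (2 / (1 - β) + 1) * δ₂ ^ (-β) := one_mul _
      _ ≤ (2 / (1 - β) + 1) * (3 * d ^ (-β)) :=
          mul_le_mul_of_nonneg_left (h3.trans (third_rpow hβ' hd0)) hK.le
      _ ≤ (3 * (2 / (1 - β) + 1) + 3) * d ^ (-β) := by nlinarith
  · -- far case
    have hker : ∀ r₁ r₂ : ℝ, wt δ₁ (t - s₁) r₁ * (wt δ₂ (t - s₂) r₂ * |r₁ - r₂| ^ (-β))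
        ≤ wt δ₁ (t - s₁) r₁ * (wt δ₂ (t - s₂) r₂ * (3 * d ^ (-β))) := by
      intro r₁ r₂
      by_cases hz1 : wt δ₁ (t - s₁) r₁ = 0
      · simp [hz1]
      by_cases hz2 : wt δ₂ (t - s₂) r₂ = 0
      · simp [hz2]
      have m1 := wt_support hz1
      have m2 := wt_support hz2
      have hfar : d / 3 ≤ |r₁ - r₂| := by
        rcases le_total s₂ s₁ with hss | hss
        · have hde : d = s₁ - s₂ := by rw [hd, abs_of_nonneg (by linarith)]
          calc d / 3 ≤ r₂ - r₁ := by linarith [m1.2, m2.1]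
            _ ≤ |r₂ - r₁| := le_abs_self _
            _ = |r₁ - r₂| := abs_sub_comm _ _
        · have hde : d = s₂ - s₁ := by rw [hd, abs_of_nonpos (by linarith)]; ring
          calc d / 3 ≤ r₁ - r₂ := by linarith [m1.1, m2.2]
            _ ≤ |r₁ - r₂| := le_abs_self _
      have hkle : |r₁ - r₂| ^ (-β) ≤ 3 * d ^ (-β) := by
        have h5 : |r₁ - r₂| ^ (-β) ≤ (d / 3) ^ (-β) :=
          Real.rpow_le_rpow_of_nonpos (by positivity) hfar (by linarith)
        exact h5.trans (third_rpow hβ' hd0)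
      exact mul_le_mul_of_nonneg_left
        (mul_le_mul_of_nonneg_left hkle (wt_nonneg h2 _ _)) (wt_nonneg h1 _ _)
    have step1 : ∀ r₁ : ℝ, (∫ r₂ in Set.Ioc (0:ℝ) t,
        wt δ₁ (t - s₁) r₁ * (wt δ₂ (t - s₂) r₂ * |r₁ - r₂| ^ (-β)))
        ≤ wt δ₁ (t - s₁) r₁ * (3 * d ^ (-β)) := by
      intro r₁
      calc (∫ r₂ in Set.Ioc (0:ℝ) t,
            wt δ₁ (t - s₁) r₁ * (wt δ₂ (t - s₂) r₂ * |r₁ - r₂| ^ (-β)))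
          ≤ ∫ r₂ in Set.Ioc (0:ℝ) t,
            wt δ₁ (t - s₁) r₁ * (wt δ₂ (t - s₂) r₂ * (3 * d ^ (-β))) :=
            setIntegral_mono_on ((h_integrableOn hβ' h2 r₁ (t - s₂) _).const_mul _)
              (((wt_integrable h2 _).integrableOn.mul_const _).const_mul _)
              measurableSet_Ioc (fun r₂ _ => hker r₁ r₂)
        _ = wt δ₁ (t - s₁) r₁ *
            ((∫ r₂ in Set.Ioc (0:ℝ) t, wt δ₂ (t - s₂) r₂) * (3 * d ^ (-β))) := by
            rw [integral_const_mul, integral_mul_const]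
        _ ≤ wt δ₁ (t - s₁) r₁ * (1 * (3 * d ^ (-β))) := by
            refine mul_le_mul_of_nonneg_left ?_ (wt_nonneg h1 _ _)
            exact mul_le_mul_of_nonneg_right (wt_integral_le h2 _ t) (by positivity)
        _ = wt δ₁ (t - s₁) r₁ * (3 * d ^ (-β)) := by rw [one_mul]
    calc ∫ r₁ in Set.Ioc (0:ℝ) t, ∫ r₂ in Set.Ioc (0:ℝ) t,
          wt δ₁ (t - s₁) r₁ * (wt δ₂ (t - s₂) r₂ * |r₁ - r₂| ^ (-β))
        ≤ ∫ r₁ in Set.Ioc (0:ℝ) t, wt δ₁ (t - s₁) r₁ * (3 * d ^ (-β)) :=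
          setIntegral_mono_on
            ((F_integrable hβ' h1 h2 t (t - s₁) (t - s₂)).integral_prod_left)
            ((wt_integrable h1 _).integrableOn.mul_const _) measurableSet_Ioc
            (fun r₁ _ => step1 r₁)
      _ = (∫ r₁ in Set.Ioc (0:ℝ) t, wt δ₁ (t - s₁) r₁) * (3 * d ^ (-β)) :=
          integral_mul_const _ _
      _ ≤ 1 * (3 * d ^ (-β)) :=
          mul_le_mul_of_nonneg_right (wt_integral_le h1 _ t) (by positivity)
      _ ≤ (3 * (2 / (1 - β) + 1) + 3) * d ^ (-β) := by nlinarith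

theorem stmt18 (β₀ : ℝ) (hβ : β₀ ∈ Set.Ioo (0:ℝ) 1) :
    ∃ C > (0:ℝ), ∀ δ₁ δ₂ : ℝ, 0 < δ₁ → 0 < δ₂ → ∀ t > (0:ℝ),
      ∀ s₁ ∈ Set.Icc (0:ℝ) t, ∀ s₂ ∈ Set.Icc (0:ℝ) t, s₁ ≠ s₂ →
      (∫ r₁ in Set.Ioc (0:ℝ) t, ∫ r₂ in Set.Ioc (0:ℝ) t,
          (δ₁⁻¹ * Set.indicator (Set.Icc (0:ℝ) δ₁) (fun _ => (1:ℝ)) (t - s₁ - r₁)) *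
          (δ₂⁻¹ * Set.indicator (Set.Icc (0:ℝ) δ₂) (fun _ => (1:ℝ)) (t - s₂ - r₂)) *
          |r₁ - r₂| ^ (-β₀))
        ≤ C * |s₁ - s₂| ^ (-β₀) := by
  obtain ⟨hβ0, hβ1⟩ := hβ
  have hβ' : β₀ ∈ Set.Ioo (0:ℝ) 1 := ⟨hβ0, hβ1⟩
  have h1β : 0 < 1 - β₀ := by linarith
  refine ⟨3 * (2 / (1 - β₀) + 1) + 3, by positivity, ?_⟩
  intro δ₁ δ₂ h1 h2 t ht s₁ hs₁ s₂ hs₂ hne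
  have key : ∀ r₁ r₂ : ℝ,
      (δ₁⁻¹ * Set.indicator (Set.Icc (0:ℝ) δ₁) (fun _ => (1:ℝ)) (t - s₁ - r₁)) *
      (δ₂⁻¹ * Set.indicator (Set.Icc (0:ℝ) δ₂) (fun _ => (1:ℝ)) (t - s₂ - r₂)) *
      |r₁ - r₂| ^ (-β₀)
      = wt δ₁ (t - s₁) r₁ * (wt δ₂ (t - s₂) r₂ * |r₁ - r₂| ^ (-β₀)) := by
    intro r₁ r₂
    rw [mul_assoc]
    rfl
  simp_rw [key]
  rcases le_total δ₁ δ₂ with hle | hle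
  · exact master hβ' h1 h2 hle ht hs₁ hs₂ hne
  · have hswap : (∫ r₁ in Set.Ioc (0:ℝ) t, ∫ r₂ in Set.Ioc (0:ℝ) t,
        wt δ₁ (t - s₁) r₁ * (wt δ₂ (t - s₂) r₂ * |r₁ - r₂| ^ (-β₀)))
        = ∫ r₂ in Set.Ioc (0:ℝ) t, ∫ r₁ in Set.Ioc (0:ℝ) t,
        wt δ₁ (t - s₁) r₁ * (wt δ₂ (t - s₂) r₂ * |r₁ - r₂| ^ (-β₀)) :=
      integral_integral_swap (F_integrable hβ' h1 h2 t (t - s₁) (t - s₂))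
    rw [hswap]
    have hcomm : ∀ y x : ℝ, wt δ₁ (t - s₁) x * (wt δ₂ (t - s₂) y * |x - y| ^ (-β₀))
        = wt δ₂ (t - s₂) y * (wt δ₁ (t - s₁) x * |y - x| ^ (-β₀)) := by
      intro y x; rw [abs_sub_comm]; ring
    simp_rw [hcomm]
    have hm := master hβ' h2 h1 hle ht hs₂ hs₁ (Ne.symm hne)
    rwa [abs_sub_comm s₂ s₁] at hm
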